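/- arXiv:1703.01067 — 3 statements merged into one kernel-verified Lean document; each statement's English description precedes it below -/
import Mathlib

section
/- Let p : ℂ → ℝ be integrable with ∫ p = 1, and let r : ℂ × ℂ → ℝ be a nonnegative measurable kernel with ∫ r(α, β) dβ = 1 for all α (a classical channel on P-distributions). Define q(β) = ∫ p(α) r(α, β) dα. Then the negativity is monotone: C₋(q) ≤ C₋(p). -/
open MeasureTheory

/-- The negativity of a signed `P`-distribution density: total mass of its negative part. -/
noncomputable def negativity (p : ℂ → ℝ) : ℝ := ∫ x, max (-(p x)) 0

/-- Negativity is monotone under classical channels on `P`-distributions: pushing a signed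
density through a nonnegative normalized kernel cannot increase the negativity. -/
theorem negativity_monotone_kernel (p : ℂ → ℝ) (hp : Integrable p) (hp1 : ∫ x, p x = 1)
    (r : ℂ → ℂ → ℝ) (hrm : Measurable (Function.uncurry r))
    (hrnn : ∀ a b, 0 ≤ r a b) (hrn : ∀ a, ∫ b, r a b = 1) :
    negativity (fun b => ∫ a, p a * r a b) ≤ negativity p := by
  classical
  -- slices of r are integrable
  have hri : ∀ a, Integrable (fun b => r a b) := by
    intro a
    by_contra h
    have := hrn a
    rw [integral_undef h] at this
    norm_num at this
  have hrl : ∀ a, ∫⁻ b, ENNReal.ofReal (r a b) = 1 := by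
    intro a
    rw [← ofReal_integral_eq_lintegral_ofReal (hri a)
      (Filter.Eventually.of_forall (hrnn a)), hrn a, ENNReal.ofReal_one]
  -- key integrability on the product
  have key : ∀ f : ℂ → ℝ, Integrable f →
      Integrable (fun z : ℂ × ℂ => f z.1 * r z.1 z.2)
        ((volume : Measure ℂ).prod volume) := by
    intro f hf
    have hmeas : AEStronglyMeasurable (fun z : ℂ × ℂ => f z.1 * r z.1 z.2)
        ((volume : Measure ℂ).prod volume) := by
      have h1 : AEStronglyMeasurable (fun z : ℂ × ℂ => f z.1) ((volume : Measure ℂ).prod volume) :=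
        hf.aestronglyMeasurable.comp_fst
      exact h1.mul hrm.aestronglyMeasurable
    refine ⟨hmeas, ?_⟩
    show (∫⁻ z, (‖f z.1 * r z.1 z.2‖₊ : ENNReal) ∂((volume : Measure ℂ).prod volume)) < ⊤
    have haem : AEMeasurable (fun z : ℂ × ℂ => (‖f z.1 * r z.1 z.2‖₊ : ENNReal))
        ((volume : Measure ℂ).prod volume) := hmeas.enorm
    rw [lintegral_prod _ haem]
    have hinner : ∀ a, ∫⁻ b, (‖f a * r a b‖₊ : ENNReal) = ‖f a‖₊ := by
      intro a
      have : ∀ b, (‖f a * r a b‖₊ : ENNReal) = ‖f a‖₊ * ENNReal.ofReal (r a b) := by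
        intro b
        rw [nnnorm_mul, ENNReal.coe_mul, ← enorm_eq_nnnorm (r a b), Real.enorm_eq_ofReal (hrnn a b)]
      simp_rw [this]
      rw [lintegral_const_mul' _ _ ENNReal.coe_ne_top, hrl a, mul_one]
    simp_rw [hinner]
    exact hf.2
  set Pm : ℂ → ℝ := fun a => max (-(p a)) 0 with hPmdef
  have hPm : Integrable Pm := hp.neg.pos_part
  have hPmnn : ∀ a, 0 ≤ Pm a := fun a => le_max_right _ _
  -- integrable products
  have hpr := key p hp
  have hPr := key Pm hPm
  set q : ℂ → ℝ := fun b => ∫ a, p a * r a b with hqdef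
  set g : ℂ → ℝ := fun b => ∫ a, Pm a * r a b with hgdef
  have hg : Integrable g := hPr.swap.integral_prod_left
  have hgnn : ∀ b, 0 ≤ g b := fun b =>
    integral_nonneg fun a => mul_nonneg (hPmnn a) (hrnn a b)
  -- pointwise a.e. bound : max (-(q b)) 0 ≤ g b
  have hbd : ∀ᵐ b, max (-(q b)) 0 ≤ g b := by
    filter_upwards [hpr.swap.prod_right_ae, hPr.swap.prod_right_ae] with b h1 h2
    have h1' : Integrable (fun a => p a * r a b) := by simpa [Function.comp] using h1
    have h2' : Integrable (fun a => Pm a * r a b) := by simpa [Function.comp] using h2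
    refine max_le ?_ (hgnn b)
    have : -(q b) = ∫ a, -(p a) * r a b := by
      simp only [hqdef, ← integral_neg, neg_mul]
    rw [this]
    have h1n : Integrable (fun a => -(p a) * r a b) :=
      h1'.neg.congr (Filter.Eventually.of_forall fun a => by simp [neg_mul])
    refine integral_mono h1n ?_ ?_
    · exact h2'
    · intro a
      exact mul_le_mul_of_nonneg_right (le_max_left _ _) (hrnn a b)
  -- the function b ↦ max (-(q b)) 0 is integrable
  have hqm : AEStronglyMeasurable q volume := hpr.swap.aestronglyMeasurable.integral_prod_right'
  have hfi : Integrable (fun b => max (-(q b)) 0) := by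
    refine Integrable.mono hg (hqm.neg.sup aestronglyMeasurable_const) ?_
    filter_upwards [hbd] with b hb
    rw [Real.norm_of_nonneg (le_max_right _ _), Real.norm_of_nonneg (hgnn b)]
    exact hb
  -- conclude
  have step1 : negativity q ≤ ∫ b, g b := integral_mono_ae hfi hg hbd
  have step2 : ∫ b, g b = negativity p := by
    have hswap := integral_integral_swap (f := fun a b => Pm a * r a b) hPr
    rw [hgdef]
    rw [← hswap]
    have : ∀ a, ∫ b, Pm a * r a b = Pm a := by
      intro a
      rw [integral_const_mul, hrn a, mul_one]
    simp_rw [this]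
    rfl
  calc negativity q ≤ ∫ b, g b := step1
    _ = negativity p := step2
end

section
/- Let ρ and σ be density matrices on H_A ⊗ H_B such that σ = Σ_i p_i ρ_i ⊗ |b_i⟩⟨b_i| and ρ = Σ_i p_i τ_i ⊗ |b_i⟩⟨b_i| with {|b_i⟩} orthonormal in H_B. Then for the relative entropy of coherence C_r with respect to any product basis {|a_j⟩ ⊗ |b_i⟩}, C_r(Σ_i p_i τ_i ⊗ |b_i⟩⟨b_i|) = Σ_i p_i C_r(τ_i), where each C_r(τ_i) is measured in basis {|a_j⟩}. (Coherence is additive over orthogonal block-diagonal flags.) -/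
open Matrix
open scoped ComplexOrder

variable {n : Type*} [Fintype n] [DecidableEq n]

/-- The trace norm (sum of singular values) of a complex square matrix. -/
noncomputable def traceNorm (A : Matrix n n ℂ) : ℝ :=
  (((posSemidef_conjTranspose_mul_self A).1.eigenvectorUnitary.1 *
      diagonal (((↑) : ℝ → ℂ) ∘ (√·) ∘ (posSemidef_conjTranspose_mul_self A).1.eigenvalues) *
      (star (posSemidef_conjTranspose_mul_self A).1.eigenvectorUnitary : Matrix n n ℂ)).trace).re

/-- `A` is a density matrix: positive semidefinite with unit trace. -/
def IsDensityMatrix (A : Matrix n n ℂ) : Prop := A.PosSemidef ∧ A.trace = 1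

/-- `A` is incoherent (diagonal) in the fixed basis. -/
def Incoherent (A : Matrix n n ℂ) : Prop := ∀ i j, i ≠ j → A i j = 0

/-- The dephasing map, removing all off-diagonal entries. -/
def dephase (A : Matrix n n ℂ) : Matrix n n ℂ := Matrix.diagonal (fun i => A i i)

/-- The `l₁`-norm of coherence: sum of moduli of off-diagonal entries. -/
noncomputable def Cl1 (A : Matrix n n ℂ) : ℝ :=
  ∑ i, ∑ j, if i ≠ j then ‖A i j‖ else 0

/-- The von Neumann entropy `-Tr ρ log ρ` of a Hermitian matrix, via its eigenvalues
(junk value `0` on non-Hermitian matrices). -/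
noncomputable def vnEntropy (A : Matrix n n ℂ) : ℝ :=
  if h : A.IsHermitian then -∑ i, h.eigenvalues i * Real.log (h.eigenvalues i) else 0

/-- The relative entropy of coherence `C_r(ρ) = S(Δ(ρ)) - S(ρ)`. -/
noncomputable def Crel (A : Matrix n n ℂ) : ℝ := vnEntropy (dephase A) - vnEntropy A


section Aux
open Polynomial
variable {k : Type*} [Fintype k] [DecidableEq k]

lemma my_charpoly_conj_unitary (U : Matrix.unitaryGroup k ℂ) (B : Matrix k k ℂ) :
    ((U : Matrix k k ℂ) * B * star (U : Matrix k k ℂ)).charpoly = B.charpoly := by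
  set Uc : Matrix k k ℂ[X] := (U : Matrix k k ℂ).map C with hUc
  set Vc : Matrix k k ℂ[X] := (star (U : Matrix k k ℂ)).map C with hVc
  have hUV : Uc * Vc = 1 := by
    rw [hUc, hVc, ← Matrix.map_mul, U.2.2, Matrix.map_one _ (map_zero C) (map_one C)]
  have hcomm : Uc * Matrix.scalar k (X : ℂ[X]) = Matrix.scalar k (X : ℂ[X]) * Uc :=
    (Matrix.scalar_commute (X : ℂ[X]) (fun r => Commute.all _ _) Uc).symm
  have hch : charmatrix ((U : Matrix k k ℂ) * B * star (U : Matrix k k ℂ))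
      = Uc * charmatrix B * Vc := by
    rw [charmatrix, charmatrix, Matrix.mul_sub, Matrix.sub_mul]
    congr 1
    · rw [hcomm, mul_assoc, hUV, mul_one]
    · rw [RingHom.mapMatrix_apply, RingHom.mapMatrix_apply, hUc, hVc,
        ← Matrix.map_mul, ← Matrix.map_mul]
  have hdet : det (Uc * charmatrix B * Vc) = det (charmatrix B) := by
    rw [det_mul, det_mul]
    have : det Uc * det Vc = 1 := by rw [← det_mul, hUV, det_one]
    calc det Uc * det (charmatrix B) * det Vc
        = det Uc * det Vc * det (charmatrix B) := by ring
      _ = det (charmatrix B) := by rw [this, one_mul]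
  rw [Matrix.charpoly, Matrix.charpoly, hch, hdet]

lemma my_charpoly_diagonal (c : k → ℂ) :
    (Matrix.diagonal c).charpoly = ∏ i, (X - C (c i)) := by
  have : charmatrix (Matrix.diagonal c) = Matrix.diagonal (fun i => X - C (c i)) := by
    ext i j
    by_cases h : i = j
    · subst h; simp
    · simp [h, Matrix.diagonal_apply_ne _ h]
  rw [Matrix.charpoly, this, det_diagonal]

lemma my_sumRoots {A : Matrix k k ℂ} {U : Matrix.unitaryGroup k ℂ} {d : k → ℝ}
    (hA : A = (U : Matrix k k ℂ) * Matrix.diagonal (fun i => (d i : ℂ)) * star (U : Matrix k k ℂ))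
    (f : ℂ → ℝ) : (A.charpoly.roots.map f).sum = ∑ i, f (d i : ℂ) := by
  rw [hA, my_charpoly_conj_unitary, my_charpoly_diagonal]
  rw [Finset.prod_eq_multiset_prod]
  rw [show (Multiset.map (fun i => X - C ((d i : ℝ) : ℂ)) Finset.univ.val)
      = Multiset.map (fun a => X - C a) (Multiset.map (fun i => ((d i : ℝ) : ℂ)) Finset.univ.val)
      from by rw [Multiset.map_map]; rfl]
  rw [roots_multiset_prod_X_sub_C]
  rw [Multiset.map_map]
  rw [Finset.sum_eq_multiset_sum]
  rfl

lemma my_trace_conj {A : Matrix k k ℂ} {U : Matrix.unitaryGroup k ℂ} {d : k → ℝ}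
    (hA : A = (U : Matrix k k ℂ) * Matrix.diagonal (fun i => (d i : ℂ)) * star (U : Matrix k k ℂ)) :
    A.trace = ∑ i, (d i : ℂ) := by
  rw [hA, Matrix.trace_mul_comm, ← mul_assoc, U.2.1, one_mul, Matrix.trace_diagonal]

noncomputable def entR (A : Matrix k k ℂ) : ℝ :=
  -((A.charpoly.roots.map (fun z => z.re * Real.log z.re)).sum)


lemma my_spectral (A : Matrix k k ℂ) (hA : A.IsHermitian) :
    A = (hA.eigenvectorUnitary : Matrix k k ℂ) *
        Matrix.diagonal (fun i => (hA.eigenvalues i : ℂ)) *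
        star (hA.eigenvectorUnitary : Matrix k k ℂ) := by
  convert hA.spectral_theorem using 2
  rw [Unitary.conjStarAlgAut_apply]; rfl

lemma my_vnEntropy_eq_entR (A : Matrix k k ℂ) (hA : A.IsHermitian) :
    vnEntropy A = entR A := by
  rw [vnEntropy, dif_pos hA, entR,
    my_sumRoots (my_spectral A hA) (fun z => z.re * Real.log z.re)]
  simp

end Aux

section Aux2
variable {k q : Type*} [Fintype k] [DecidableEq k] [Fintype q] [DecidableEq q]

lemma my_charmatrix_blockDiagonal (M : k → Matrix q q ℂ) :
    charmatrix (Matrix.blockDiagonal M) = Matrix.blockDiagonal (fun i => charmatrix (M i)) := by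
  ext ⟨x, i⟩ ⟨y, j⟩
  by_cases h : i = j
  · subst h
    by_cases hx : x = y
    · subst hx
      simp [Matrix.blockDiagonal_apply]
    · have hne : ((x, i) : q × k) ≠ (y, i) := by simp [hx]
      rw [charmatrix_apply_ne _ _ _ hne]
      simp [Matrix.blockDiagonal_apply, charmatrix_apply_ne _ _ _ hx]
  · have hne : ((x, i) : q × k) ≠ (y, j) := by simp [h]
    rw [charmatrix_apply_ne _ _ _ hne]
    simp [Matrix.blockDiagonal_apply, h]

lemma my_charpoly_blockDiagonal (M : k → Matrix q q ℂ) :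
    (Matrix.blockDiagonal M).charpoly = ∏ i, (M i).charpoly := by
  rw [Matrix.charpoly, my_charmatrix_blockDiagonal, Matrix.det_blockDiagonal]
  rfl

lemma my_entR_blockDiagonal (M : k → Matrix q q ℂ) :
    entR (Matrix.blockDiagonal M) = ∑ i, entR (M i) := by
  have hne : (∏ i, (M i).charpoly) ≠ 0 :=
    Finset.prod_ne_zero_iff.2 fun i _ => (Matrix.charpoly_monic (M i)).ne_zero
  rw [entR, my_charpoly_blockDiagonal, Polynomial.roots_prod _ _ hne,
    Multiset.map_bind, Multiset.sum_bind]
  rw [show ∑ i, entR (M i) = ∑ i, -(((M i).charpoly.roots.map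
      (fun z => z.re * Real.log z.re)).sum) from rfl]
  rw [Finset.sum_neg_distrib]
  congr 1

lemma my_hermitian_smul (p : ℝ) (B : Matrix q q ℂ) (hB : B.IsHermitian) :
    ((p : ℂ) • B).IsHermitian := by
  rw [Matrix.IsHermitian, Matrix.conjTranspose_smul, hB.eq]
  norm_num

lemma my_vnEntropy_smul (p : ℝ) (B : Matrix q q ℂ) (hB : B.IsHermitian) (htr : B.trace = 1) :
    vnEntropy ((p : ℂ) • B) = p * vnEntropy B - p * Real.log p := by
  have hU := my_spectral B hB
  set d := hB.eigenvalues with hd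
  have hdiag : Matrix.diagonal (fun i => ((p * d i : ℝ) : ℂ))
      = (p : ℂ) • Matrix.diagonal (fun i => (d i : ℂ)) := by
    ext i j
    by_cases h : i = j
    · subst h; simp
    · simp [Matrix.diagonal_apply_ne _ h]
  have hU2 : (p : ℂ) • B = (hB.eigenvectorUnitary : Matrix q q ℂ) *
      Matrix.diagonal (fun i => ((p * d i : ℝ) : ℂ)) *
      star (hB.eigenvectorUnitary : Matrix q q ℂ) := by
    rw [hdiag, mul_smul_comm, smul_mul_assoc, ← hU]
  have hsum : ∑ i, d i = 1 := by
    have h1 : B.trace = ∑ i, (d i : ℂ) := my_trace_conj hU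
    have := h1.symm.trans htr
    have h2 : ((∑ i, d i : ℝ) : ℂ) = 1 := by push_cast; exact this
    exact_mod_cast h2
  rw [my_vnEntropy_eq_entR _ (my_hermitian_smul p B hB), entR,
    my_sumRoots hU2 (fun z => z.re * Real.log z.re),
    my_vnEntropy_eq_entR _ hB, entR, my_sumRoots hU (fun z => z.re * Real.log z.re)]
  simp only [Complex.ofReal_re]
  have key : ∀ x : ℝ, (p * x) * Real.log (p * x) = p * x * Real.log p + p * (x * Real.log x) := by
    intro x
    by_cases hp : p = 0
    · simp [hp]
    by_cases hx : x = 0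
    · simp [hx]
    rw [Real.log_mul hp hx]; ring
  calc -∑ i, (p * d i) * Real.log (p * d i)
      = -∑ i, (p * d i * Real.log p + p * (d i * Real.log (d i))) := by
        congr 1; exact Finset.sum_congr rfl fun i _ => key (d i)
    _ = -(p * Real.log p * ∑ i, d i + p * ∑ i, d i * Real.log (d i)) := by
        rw [Finset.sum_add_distrib, Finset.mul_sum, Finset.mul_sum]
        congr 2
        exact Finset.sum_congr rfl fun i _ => by ring
    _ = p * -(∑ i, d i * Real.log (d i)) - p * Real.log p := by
        rw [hsum]; ring

end Aux2


section Aux3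
variable {q : Type*} [Fintype q] [DecidableEq q]

lemma my_isHermitian_blockDiagonal {k : Type*} [Fintype k] [DecidableEq k]
    (N : k → Matrix q q ℂ) (h : ∀ i, (N i).IsHermitian) :
    (Matrix.blockDiagonal N).IsHermitian := by
  rw [Matrix.IsHermitian, Matrix.blockDiagonal_conjTranspose]
  exact congrArg _ (funext fun i => (h i).eq)

lemma my_vnEntropy_blockDiagonal {k : Type*} [Fintype k] [DecidableEq k]
    (N : k → Matrix q q ℂ) (h : ∀ i, (N i).IsHermitian) :
    vnEntropy (Matrix.blockDiagonal N) = ∑ i, vnEntropy (N i) := by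
  rw [my_vnEntropy_eq_entR _ (my_isHermitian_blockDiagonal N h), my_entR_blockDiagonal]
  exact Finset.sum_congr rfl fun i _ => (my_vnEntropy_eq_entR _ (h i)).symm

lemma my_dephase_isHermitian (A : Matrix q q ℂ) (hA : A.IsHermitian) :
    (dephase A).IsHermitian := by
  rw [dephase, Matrix.IsHermitian, Matrix.diagonal_conjTranspose]
  have hs : (star fun i => A i i) = fun i => A i i := by
    funext i
    rw [Pi.star_apply]
    conv_rhs => rw [← hA.eq]
    rw [Matrix.conjTranspose_apply]
  rw [hs]

lemma my_trace_dephase (A : Matrix q q ℂ) : (dephase A).trace = A.trace := by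
  rw [dephase, Matrix.trace_diagonal, Matrix.trace]
  rfl

end Aux3

open Kronecker in
/-- Flag-additivity of the relative entropy of coherence: for a block-diagonal state
`Σ_i p_i τ_i ⊗ |b_i⟩⟨b_i|` with orthonormal flags `|b_i⟩`, the coherence in the product
basis is the average of the coherences of the blocks. -/
theorem Crel_flag_additivity {a m : ℕ} (p : Fin m → ℝ) (hp0 : ∀ i, 0 ≤ p i)
    (hp1 : ∑ i, p i = 1) (τ : Fin m → Matrix (Fin a) (Fin a) ℂ)
    (hτ : ∀ i, IsDensityMatrix (τ i)) :
    Crel (∑ i, (p i : ℂ) • (τ i ⊗ₖ Matrix.single i i (1 : ℂ))) =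
      ∑ i, p i * Crel (τ i) := by
  have hρ : (∑ i, (p i : ℂ) • (τ i ⊗ₖ Matrix.single i i (1 : ℂ)))
      = Matrix.blockDiagonal (fun i => (p i : ℂ) • τ i) := by
    ext ⟨x, y⟩ ⟨x', y'⟩
    simp only [Matrix.sum_apply, Matrix.smul_apply, Matrix.kroneckerMap_apply,
      Matrix.blockDiagonal_apply, Matrix.single, Matrix.of_apply, smul_eq_mul,
      mul_ite, mul_one, mul_zero, ite_and]
    rw [Finset.sum_ite_eq' Finset.univ y (fun i => if i = y' then (p i : ℂ) * τ i x x' else 0)]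
    simp only [Finset.mem_univ, if_true]
  rw [hρ, Crel]
  have hτH : ∀ i, (τ i).IsHermitian := fun i => (hτ i).1.1
  have hdeph : dephase (Matrix.blockDiagonal fun i => (p i : ℂ) • τ i)
      = Matrix.blockDiagonal (fun i => (p i : ℂ) • dephase (τ i)) := by
    ext ⟨x, y⟩ ⟨x', y'⟩
    by_cases h1 : y = y'
    · subst h1
      by_cases h2 : x = x'
      · subst h2
        simp [dephase, Matrix.blockDiagonal_apply]
      · have : ((x, y) : Fin a × Fin m) ≠ (x', y) := by simp [h2]
        simp [dephase, Matrix.diagonal_apply_ne _ this, Matrix.blockDiagonal_apply,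
          Matrix.diagonal_apply_ne _ h2]
    · have : ((x, y) : Fin a × Fin m) ≠ (x', y') := by simp [h1]
      simp [dephase, Matrix.diagonal_apply_ne _ this, Matrix.blockDiagonal_apply, h1]
  rw [hdeph]
  rw [my_vnEntropy_blockDiagonal _ (fun i => my_hermitian_smul _ _ (my_dephase_isHermitian _ (hτH i))),
    my_vnEntropy_blockDiagonal _ (fun i => my_hermitian_smul _ _ (hτH i))]
  have h1 : ∀ i, vnEntropy ((p i : ℂ) • dephase (τ i))
      = p i * vnEntropy (dephase (τ i)) - p i * Real.log (p i) := fun i =>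
    my_vnEntropy_smul _ _ (my_dephase_isHermitian _ (hτH i))
      (by rw [my_trace_dephase]; exact (hτ i).2)
  have h2 : ∀ i, vnEntropy ((p i : ℂ) • τ i)
      = p i * vnEntropy (τ i) - p i * Real.log (p i) := fun i =>
    my_vnEntropy_smul _ _ (hτH i) (hτ i).2
  rw [Finset.sum_congr rfl (fun i _ => h1 i), Finset.sum_congr rfl (fun i _ => h2 i),
    ← Finset.sum_sub_distrib]
  exact Finset.sum_congr rfl fun i _ => by rw [Crel]; ring
end

section
/- Let H be a separable Hilbert space and (ρ_n) a sequence of density operators (positive trace-class, trace 1) converging weakly to a density operator ρ (i.e., Tr(ρ_n A) → Tr(ρ A) for every bounded operator A, or equivalently ⟨ψ|ρ_n|φ⟩ → ⟨ψ|ρ|φ⟩ for all ψ, φ). Then ρ_n → ρ in trace norm. -/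
set_option synthInstance.maxHeartbeats 1000000
set_option maxHeartbeats 1000000

open scoped InnerProductSpace

variable {H : Type*} [NormedAddCommGroup H] [InnerProductSpace ℂ H] [CompleteSpace H]

/-- The trace norm of an operator, as the supremum of `Σ |⟨e_i, T f_i⟩|` over finite
orthonormal families `(e_i)`, `(f_i)`. -/
noncomputable def opTraceNorm (T : H →L[ℂ] H) : ℝ :=
  sSup {s : ℝ | ∃ (n : ℕ) (e f : Fin n → H), Orthonormal ℂ e ∧ Orthonormal ℂ f ∧
    s = ∑ i, ‖(inner ℂ (e i) (T (f i)) : ℂ)‖}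

/-- The trace of an operator with respect to a Hilbert basis. -/
noncomputable def opTrace (b : HilbertBasis ℕ ℂ H) (T : H →L[ℂ] H) : ℝ :=
  ∑' n : ℕ, (inner ℂ (b n) (T (b n)) : ℂ).re

private lemma conj_mul_re (z : ℂ) : ((starRingEnd ℂ) z * z).re = ‖z‖^2 := by
  rw [Complex.conj_mul']
  norm_cast

lemma hasSum_parseval (b : HilbertBasis ℕ ℂ H) (x : H) :
    HasSum (fun j => ‖(inner ℂ (b j) x : ℂ)‖^2) (‖x‖^2) := by
  have h := (b.hasSum_inner_mul_inner x x).mapL Complex.reCLM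
  have h2 : ((inner ℂ x x : ℂ)).re = ‖x‖^2 := by
    rw [@inner_self_eq_norm_sq_to_K ℂ]; norm_cast
  simp only [Complex.reCLM_apply] at h
  rw [h2] at h
  refine HasSum.congr_fun h (fun j => ?_)
  rw [← inner_conj_symm (x := x) (y := (b j : H))]
  exact (conj_mul_re _).symm

noncomputable def HSe (b : HilbertBasis ℕ ℂ H) (A : H →L[ℂ] H) : ENNReal :=
  ∑' j, ENNReal.ofReal (‖A (b j)‖^2)

lemma hse_eq_double (b : HilbertBasis ℕ ℂ H) (A : H →L[ℂ] H) :
    HSe b A = ∑' j, ∑' i, ENNReal.ofReal (‖(inner ℂ (b i) (A (b j)) : ℂ)‖^2) := by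
  unfold HSe
  congr 1; ext j
  rw [← (hasSum_parseval b (A (b j))).tsum_eq,
    ENNReal.ofReal_tsum_of_nonneg (fun i => sq_nonneg _) (hasSum_parseval b (A (b j))).summable]

lemma hse_adjoint (b : HilbertBasis ℕ ℂ H) (A : H →L[ℂ] H) :
    HSe b (ContinuousLinearMap.adjoint A) = HSe b A := by
  rw [hse_eq_double, hse_eq_double, ENNReal.tsum_comm]
  congr 1; ext j; congr 1; ext i
  congr 2
  rw [ContinuousLinearMap.adjoint_inner_right, ← inner_conj_symm, RCLike.norm_conj]

lemma besselHS (b : HilbertBasis ℕ ℂ H) (A : H →L[ℂ] H) {m : ℕ} {g : Fin m → H}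
    (hg : Orthonormal ℂ g) :
    ENNReal.ofReal (∑ i, ‖A (g i)‖^2) ≤ HSe b A := by
  rw [← hse_adjoint b A, HSe]
  have key : ∀ i : Fin m, ENNReal.ofReal (‖A (g i)‖^2)
      = ∑' j, ENNReal.ofReal (‖(inner ℂ (g i) (ContinuousLinearMap.adjoint A (b j)) : ℂ)‖^2) := by
    intro i
    rw [← (hasSum_parseval b (A (g i))).tsum_eq,
      ENNReal.ofReal_tsum_of_nonneg (fun j => sq_nonneg _) (hasSum_parseval b (A (g i))).summable]
    congr 1; ext j; congr 2
    rw [ContinuousLinearMap.adjoint_inner_right]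
    exact norm_inner_symm _ _
  calc ENNReal.ofReal (∑ i, ‖A (g i)‖^2)
      = ∑ i, ENNReal.ofReal (‖A (g i)‖^2) := by
        rw [ENNReal.ofReal_sum_of_nonneg (fun i _ => sq_nonneg _)]
    _ = ∑ i, ∑' j, ENNReal.ofReal (‖(inner ℂ (g i) (ContinuousLinearMap.adjoint A (b j)) : ℂ)‖^2) := by
        exact Finset.sum_congr rfl (fun i _ => key i)
    _ = ∑' j, ∑ i, ENNReal.ofReal (‖(inner ℂ (g i) (ContinuousLinearMap.adjoint A (b j)) : ℂ)‖^2) := by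
        rw [Summable.tsum_finsetSum (fun i _ => ENNReal.summable)]
    _ ≤ ∑' j, ENNReal.ofReal (‖ContinuousLinearMap.adjoint A (b j)‖^2) := by
        refine ENNReal.tsum_le_tsum (fun j => ?_)
        rw [← ENNReal.ofReal_sum_of_nonneg (fun i _ => sq_nonneg _)]
        exact ENNReal.ofReal_le_ofReal (hg.sum_inner_products_le _)

section Positive

variable {σ : H →L[ℂ] H} (hσ : σ.IsPositive)

lemma sqrt_selfAdjoint (hσ : σ.IsPositive) : IsSelfAdjoint (CFC.sqrt σ) :=
  ((ContinuousLinearMap.nonneg_iff_isPositive _).1 (CFC.sqrt_nonneg (a := σ))).isSelfAdjoint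

lemma inner_sqrt (hσ : σ.IsPositive) (x y : H) :
    (inner ℂ x (σ y) : ℂ) = inner ℂ (CFC.sqrt σ x) (CFC.sqrt σ y) := by
  have h2 : CFC.sqrt σ * CFC.sqrt σ = σ :=
    CFC.sqrt_mul_sqrt_self σ ((ContinuousLinearMap.nonneg_iff_isPositive σ).2 hσ)
  have : σ y = CFC.sqrt σ (CFC.sqrt σ y) := by
    conv_lhs => rw [← h2]
    rfl
  rw [this, ← ContinuousLinearMap.adjoint_inner_right (CFC.sqrt σ),
    (sqrt_selfAdjoint hσ).adjoint_eq]

lemma re_inner_eq_norm_sqrt (hσ : σ.IsPositive) (x : H) :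
    (inner ℂ x (σ x) : ℂ).re = ‖CFC.sqrt σ x‖^2 := by
  rw [inner_sqrt hσ, @inner_self_eq_norm_sq_to_K ℂ]
  norm_cast

lemma norm_inner_pos_le (hσ : σ.IsPositive) (x y : H) :
    ‖(inner ℂ x (σ y) : ℂ)‖ ≤ ‖CFC.sqrt σ x‖ * ‖CFC.sqrt σ y‖ := by
  rw [inner_sqrt hσ]
  exact norm_inner_le_norm _ _

variable (b : HilbertBasis ℕ ℂ H)

lemma summable_diag (hσ : σ.IsPositive) (htr : opTrace b σ = 1) :
    Summable (fun j => (inner ℂ (b j) (σ (b j)) : ℂ).re) := by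
  by_contra h
  unfold opTrace at htr
  rw [tsum_eq_zero_of_not_summable h] at htr
  norm_num at htr

lemma hse_sqrt (hσ : σ.IsPositive) (htr : opTrace b σ = 1) :
    HSe b (CFC.sqrt σ) = ENNReal.ofReal 1 := by
  unfold HSe
  have h1 : ∀ j : ℕ, ‖CFC.sqrt σ (b j)‖^2 = (inner ℂ (b j) (σ (b j)) : ℂ).re :=
    fun j => (re_inner_eq_norm_sqrt hσ (b j)).symm
  simp_rw [h1]
  rw [← ENNReal.ofReal_tsum_of_nonneg (fun j => by
      rw [← h1 j]; exact sq_nonneg _) (summable_diag b hσ htr)]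
  rw [← opTrace, htr]

end Positive

noncomputable def proj (b : HilbertBasis ℕ ℂ H) (k : ℕ) : H →L[ℂ] H :=
  ∑ i ∈ Finset.range k, (innerSL ℂ (b i)).smulRight (b i)

lemma proj_apply (b : HilbertBasis ℕ ℂ H) (k : ℕ) (x : H) :
    proj b k x = ∑ i ∈ Finset.range k, (inner ℂ (b i) x : ℂ) • b i := by
  simp [proj, ContinuousLinearMap.sum_apply]

lemma proj_basis_lt (b : HilbertBasis ℕ ℂ H) {k j : ℕ} (h : j < k) :
    proj b k (b j) = b j := by
  rw [proj_apply]
  have horth := b.orthonormal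
  rw [Finset.sum_eq_single j]
  · rw [orthonormal_iff_ite.1 horth j j]; simp
  · intro i _ hij
    rw [orthonormal_iff_ite.1 horth i j, if_neg hij, zero_smul]
  · intro hj; exact absurd (Finset.mem_range.2 h) hj

lemma proj_basis_ge (b : HilbertBasis ℕ ℂ H) {k j : ℕ} (h : k ≤ j) :
    proj b k (b j) = 0 := by
  rw [proj_apply]
  refine Finset.sum_eq_zero (fun i hi => ?_)
  have : ¬ i = j := by have := Finset.mem_range.1 hi; omega
  rw [orthonormal_iff_ite.1 b.orthonormal i j, if_neg this, zero_smul]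

noncomputable def qproj (b : HilbertBasis ℕ ℂ H) (k : ℕ) : H →L[ℂ] H := 1 - proj b k

lemma qproj_apply (b : HilbertBasis ℕ ℂ H) (k : ℕ) (x : H) :
    qproj b k x = x - proj b k x := rfl

lemma qproj_basis_lt (b : HilbertBasis ℕ ℂ H) {k j : ℕ} (h : j < k) :
    qproj b k (b j) = 0 := by
  rw [qproj_apply, proj_basis_lt b h, sub_self]

lemma qproj_basis_ge (b : HilbertBasis ℕ ℂ H) {k j : ℕ} (h : k ≤ j) :
    qproj b k (b j) = b j := by
  rw [qproj_apply, proj_basis_ge b h, sub_zero]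

/-- the tail of the diagonal series -/
noncomputable def tailTr (b : HilbertBasis ℕ ℂ H) (σ : H →L[ℂ] H) (k : ℕ) : ℝ :=
  ∑' j : ℕ, (inner ℂ (b (j + k)) (σ (b (j + k))) : ℂ).re

section Tails

variable (b : HilbertBasis ℕ ℂ H) {σ : H →L[ℂ] H}

lemma tail_nonneg (hσ : σ.IsPositive) (k : ℕ) : 0 ≤ tailTr b σ k :=
  tsum_nonneg (fun j => by rw [re_inner_eq_norm_sqrt hσ]; exact sq_nonneg _)

lemma tail_eq (hσ : σ.IsPositive) (htr : opTrace b σ = 1) (k : ℕ) :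
    tailTr b σ k = 1 - ∑ j ∈ Finset.range k, (inner ℂ (b j) (σ (b j)) : ℂ).re := by
  have h := Summable.sum_add_tsum_nat_add k (summable_diag b hσ htr)
  unfold opTrace at htr
  rw [htr] at h
  unfold tailTr
  linarith

lemma hse_sqrt_qproj (hσ : σ.IsPositive) (htr : opTrace b σ = 1) (k : ℕ) :
    HSe b (CFC.sqrt σ ∘L qproj b k) = ENNReal.ofReal (tailTr b σ k) := by
  unfold HSe
  set d : ℕ → ℝ := fun j => (inner ℂ (b j) (σ (b j)) : ℂ).re with hd
  have hdnn : ∀ j, 0 ≤ d j := fun j => by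
    rw [hd]; simp only []; rw [re_inner_eq_norm_sqrt hσ]; exact sq_nonneg _
  set h : ℕ → ℝ := fun j => if j < k then 0 else d j with hh
  have hterm : ∀ j : ℕ, ‖(CFC.sqrt σ ∘L qproj b k) (b j)‖^2 = h j := by
    intro j
    by_cases hj : j < k
    · simp [hh, hj, ContinuousLinearMap.comp_apply, qproj_basis_lt b hj]
    · simp only [hh, hj, if_false, ContinuousLinearMap.comp_apply,
        qproj_basis_ge b (le_of_not_gt hj)]
      rw [← re_inner_eq_norm_sqrt hσ]
  have hhs : Summable h := by
    refine Summable.of_nonneg_of_le (fun j => ?_) (fun j => ?_) (summable_diag b hσ htr)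
    · rw [hh]; dsimp only; split <;> [rfl; exact hdnn j]
    · rw [hh]; dsimp only; split <;> [exact hdnn j; rfl]
  simp_rw [hterm]
  rw [← ENNReal.ofReal_tsum_of_nonneg (fun j => by
    rw [← hterm j]; exact sq_nonneg _) hhs]
  congr 1
  have h1 := Summable.sum_add_tsum_nat_add k hhs
  have h2 : ∑ j ∈ Finset.range k, h j = 0 :=
    Finset.sum_eq_zero (fun j hj => by simp [hh, Finset.mem_range.1 hj])
  have h3 : ∀ j : ℕ, h (j + k) = d (j + k) := fun j => by simp [hh, Nat.not_lt.2 (Nat.le_add_left k j)]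
  have h4 : tailTr b σ k = ∑' (j : ℕ), d (j + k) := rfl
  have h5 : ∑' (j : ℕ), d (j + k) = ∑' (j : ℕ), h (j + k) := tsum_congr (fun j => (h3 j).symm)
  rw [h4, h5]
  linarith [h1]

lemma hse_sqrt_proj (hσ : σ.IsPositive) (htr : opTrace b σ = 1) (k : ℕ) :
    HSe b (CFC.sqrt σ ∘L proj b k) ≤ ENNReal.ofReal 1 := by
  unfold HSe
  have hterm : ∀ j : ℕ, j ∉ Finset.range k →
      ENNReal.ofReal (‖(CFC.sqrt σ ∘L proj b k) (b j)‖^2) = 0 := by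
    intro j hj
    have hj' : k ≤ j := Nat.not_lt.1 (fun hc => hj (Finset.mem_range.2 hc))
    simp [ContinuousLinearMap.comp_apply, proj_basis_ge b hj']
  rw [tsum_eq_sum hterm]
  have hterm2 : ∀ j ∈ Finset.range k, ENNReal.ofReal (‖(CFC.sqrt σ ∘L proj b k) (b j)‖^2)
      = ENNReal.ofReal ((inner ℂ (b j) (σ (b j)) : ℂ).re) := by
    intro j hj
    rw [ContinuousLinearMap.comp_apply, proj_basis_lt b (Finset.mem_range.1 hj),
      re_inner_eq_norm_sqrt hσ]
  rw [Finset.sum_congr rfl hterm2,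
    ← ENNReal.ofReal_sum_of_nonneg (fun j _ => by
      rw [re_inner_eq_norm_sqrt hσ]; exact sq_nonneg _)]
  refine ENNReal.ofReal_le_ofReal ?_
  rw [← htr]
  exact Summable.sum_le_tsum _ (fun j _ => by rw [re_inner_eq_norm_sqrt hσ]; exact sq_nonneg _)
    (summable_diag b hσ htr)

end Tails

section SumSq

variable (b : HilbertBasis ℕ ℂ H) {σ : H →L[ℂ] H}

lemma sum_sq_sqrt_le (hσ : σ.IsPositive) (htr : opTrace b σ = 1) {m : ℕ} {g : Fin m → H}
    (hg : Orthonormal ℂ g) : ∑ i, ‖CFC.sqrt σ (g i)‖^2 ≤ 1 := by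
  have h := besselHS b (CFC.sqrt σ) hg
  rw [hse_sqrt b hσ htr] at h
  exact (ENNReal.ofReal_le_ofReal_iff zero_le_one).1 h

lemma sum_sq_sqrt_proj_le (hσ : σ.IsPositive) (htr : opTrace b σ = 1) (k : ℕ) {m : ℕ}
    {g : Fin m → H} (hg : Orthonormal ℂ g) :
    ∑ i, ‖CFC.sqrt σ (proj b k (g i))‖^2 ≤ 1 := by
  have h := (besselHS b (CFC.sqrt σ ∘L proj b k) hg).trans (hse_sqrt_proj b hσ htr k)
  exact (ENNReal.ofReal_le_ofReal_iff zero_le_one).1 h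

lemma sum_sq_sqrt_qproj_le (hσ : σ.IsPositive) (htr : opTrace b σ = 1) (k : ℕ) {m : ℕ}
    {g : Fin m → H} (hg : Orthonormal ℂ g) :
    ∑ i, ‖CFC.sqrt σ (qproj b k (g i))‖^2 ≤ tailTr b σ k := by
  have h := besselHS b (CFC.sqrt σ ∘L qproj b k) hg
  rw [hse_sqrt_qproj b hσ htr k] at h
  exact (ENNReal.ofReal_le_ofReal_iff (tail_nonneg b hσ k)).1 h

end SumSq

private lemma amgm_weighted {δ : ℝ} (hδ : 0 < δ) (a c : ℝ) :
    a * c ≤ (δ * a^2 + δ⁻¹ * c^2)/2 := by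
  have h1 : δ * δ⁻¹ = 1 := mul_inv_cancel₀ hδ.ne'
  have h2 : 0 < δ⁻¹ := inv_pos.2 hδ
  nlinarith [sq_nonneg (δ * a - c), mul_pos hδ h2]

private lemma amgm_simple (a c : ℝ) : a * c ≤ (a^2 + c^2)/2 := by nlinarith [sq_nonneg (a - c)]

section Bounds

variable (b : HilbertBasis ℕ ℂ H)

lemma bessel_one {m : ℕ} {g : Fin m → H} (hg : Orthonormal ℂ g) (a : ℕ) :
    ∑ i, ‖(inner ℂ (b a) (g i) : ℂ)‖^2 ≤ 1 := by
  have h : ∀ i : Fin m, ‖(inner ℂ (b a) (g i) : ℂ)‖^2 = ‖(inner ℂ (g i) ((b a : H)) : ℂ)‖^2 := by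
    intro i; rw [norm_inner_symm]
  simp_rw [h]
  have := hg.sum_inner_products_le (x := (b a : H)) (s := Finset.univ)
  have hb : ‖(b a : H)‖ = 1 := b.orthonormal.1 a
  rw [hb] at this
  simpa using this

lemma cross_bound1 {σ : H →L[ℂ] H} (hσ : σ.IsPositive) (htr : opTrace b σ = 1) (k : ℕ)
    {m : ℕ} {e f : Fin m → H} (he : Orthonormal ℂ e) (hf : Orthonormal ℂ f)
    {δ : ℝ} (hδ : 0 < δ) :
    ∑ i, ‖(inner ℂ (qproj b k (e i)) (σ (proj b k (f i))) : ℂ)‖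
      ≤ (δ⁻¹ * tailTr b σ k + δ)/2 := by
  have hpt : ∀ i : Fin m, ‖(inner ℂ (qproj b k (e i)) (σ (proj b k (f i))) : ℂ)‖
      ≤ (δ⁻¹ * ‖CFC.sqrt σ (qproj b k (e i))‖^2 + δ * ‖CFC.sqrt σ (proj b k (f i))‖^2)/2 := by
    intro i
    refine (norm_inner_pos_le hσ _ _).trans ?_
    have := amgm_weighted (inv_pos.2 hδ) ‖CFC.sqrt σ (qproj b k (e i))‖ ‖CFC.sqrt σ (proj b k (f i))‖
    rwa [inv_inv] at this
  refine (Finset.sum_le_sum (fun i _ => hpt i)).trans ?_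
  rw [← Finset.sum_div, Finset.sum_add_distrib, ← Finset.mul_sum, ← Finset.mul_sum]
  have h1 := sum_sq_sqrt_qproj_le b hσ htr k he
  have h2 := sum_sq_sqrt_proj_le b hσ htr k hf
  have hδ' : (0:ℝ) ≤ δ⁻¹ := le_of_lt (inv_pos.2 hδ)
  have := mul_le_mul_of_nonneg_left h1 hδ'
  have := mul_le_mul_of_nonneg_left h2 hδ.le
  linarith

lemma cross_bound2 {σ : H →L[ℂ] H} (hσ : σ.IsPositive) (htr : opTrace b σ = 1) (k : ℕ)
    {m : ℕ} {e f : Fin m → H} (he : Orthonormal ℂ e) (hf : Orthonormal ℂ f)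
    {δ : ℝ} (hδ : 0 < δ) :
    ∑ i, ‖(inner ℂ (e i) (σ (qproj b k (f i))) : ℂ)‖ ≤ (δ + δ⁻¹ * tailTr b σ k)/2 := by
  have hpt : ∀ i : Fin m, ‖(inner ℂ (e i) (σ (qproj b k (f i))) : ℂ)‖
      ≤ (δ * ‖CFC.sqrt σ (e i)‖^2 + δ⁻¹ * ‖CFC.sqrt σ (qproj b k (f i))‖^2)/2 := by
    intro i
    exact (norm_inner_pos_le hσ _ _).trans (amgm_weighted hδ _ _)
  refine (Finset.sum_le_sum (fun i _ => hpt i)).trans ?_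
  rw [← Finset.sum_div, Finset.sum_add_distrib, ← Finset.mul_sum, ← Finset.mul_sum]
  have h1 := sum_sq_sqrt_le b hσ htr he
  have h2 := sum_sq_sqrt_qproj_le b hσ htr k hf
  have hδ' : (0:ℝ) ≤ δ⁻¹ := le_of_lt (inv_pos.2 hδ)
  have := mul_le_mul_of_nonneg_left h1 hδ.le
  have := mul_le_mul_of_nonneg_left h2 hδ'
  linarith

lemma block_bound (T : H →L[ℂ] H) (k : ℕ) {m : ℕ} {e f : Fin m → H}
    (he : Orthonormal ℂ e) (hf : Orthonormal ℂ f) :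
    ∑ i, ‖(inner ℂ (proj b k (e i)) (T (proj b k (f i))) : ℂ)‖
      ≤ ∑ a ∈ Finset.range k, ∑ c ∈ Finset.range k, ‖(inner ℂ (b a) (T (b c)) : ℂ)‖ := by
  have expand : ∀ x y : H, (inner ℂ (proj b k x) (T (proj b k y)) : ℂ)
      = ∑ a ∈ Finset.range k, ∑ c ∈ Finset.range k,
          (starRingEnd ℂ) (inner ℂ (b a) x : ℂ) * ((inner ℂ (b c) y : ℂ) * (inner ℂ (b a) (T (b c)) : ℂ)) := by
    intro x y
    rw [proj_apply, proj_apply, map_sum, sum_inner]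
    refine Finset.sum_congr rfl (fun a _ => ?_)
    rw [inner_smul_left, inner_sum, Finset.mul_sum]
    refine Finset.sum_congr rfl (fun c _ => ?_)
    rw [ContinuousLinearMap.map_smul, inner_smul_right]
  have hpt : ∀ i : Fin m, ‖(inner ℂ (proj b k (e i)) (T (proj b k (f i))) : ℂ)‖
      ≤ ∑ a ∈ Finset.range k, ∑ c ∈ Finset.range k,
          ‖(inner ℂ (b a) (e i) : ℂ)‖ * ‖(inner ℂ (b c) (f i) : ℂ)‖ * ‖(inner ℂ (b a) (T (b c)) : ℂ)‖ := by
    intro i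
    rw [expand]
    refine (norm_sum_le _ _).trans (Finset.sum_le_sum (fun a _ => ?_))
    refine (norm_sum_le _ _).trans (Finset.sum_le_sum (fun c _ => ?_))
    rw [norm_mul, norm_mul, RCLike.norm_conj, ← mul_assoc]
  refine (Finset.sum_le_sum (fun i _ => hpt i)).trans ?_
  rw [Finset.sum_comm]
  refine Finset.sum_le_sum (fun a _ => ?_)
  rw [Finset.sum_comm]
  refine Finset.sum_le_sum (fun c _ => ?_)
  have key : ∑ i, ‖(inner ℂ (b a) (e i) : ℂ)‖ * ‖(inner ℂ (b c) (f i) : ℂ)‖ ≤ 1 := by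
    have hpt2 : ∀ i : Fin m, ‖(inner ℂ (b a) (e i) : ℂ)‖ * ‖(inner ℂ (b c) (f i) : ℂ)‖
        ≤ (‖(inner ℂ (b a) (e i) : ℂ)‖^2 + ‖(inner ℂ (b c) (f i) : ℂ)‖^2)/2 :=
      fun i => amgm_simple _ _
    refine (Finset.sum_le_sum (fun i _ => hpt2 i)).trans ?_
    rw [← Finset.sum_div, Finset.sum_add_distrib]
    have h1 := bessel_one b he a
    have h2 := bessel_one b hf c
    linarith
  calc ∑ i, ‖(inner ℂ (b a) (e i) : ℂ)‖ * ‖(inner ℂ (b c) (f i) : ℂ)‖ * ‖(inner ℂ (b a) (T (b c)) : ℂ)‖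
      = (∑ i, ‖(inner ℂ (b a) (e i) : ℂ)‖ * ‖(inner ℂ (b c) (f i) : ℂ)‖) * ‖(inner ℂ (b a) (T (b c)) : ℂ)‖ := by
        rw [Finset.sum_mul]
    _ ≤ 1 * ‖(inner ℂ (b a) (T (b c)) : ℂ)‖ :=
        mul_le_mul_of_nonneg_right key (norm_nonneg _)
    _ = ‖(inner ℂ (b a) (T (b c)) : ℂ)‖ := one_mul _

end Bounds

lemma master_bound (b : HilbertBasis ℕ ℂ H) {σ1 σ2 : H →L[ℂ] H}
    (h1 : σ1.IsPositive) (h2 : σ2.IsPositive)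
    (ht1 : opTrace b σ1 = 1) (ht2 : opTrace b σ2 = 1) (k : ℕ)
    {m : ℕ} {e f : Fin m → H} (he : Orthonormal ℂ e) (hf : Orthonormal ℂ f)
    {δ : ℝ} (hδ : 0 < δ) :
    ∑ i, ‖(inner ℂ (e i) ((σ1 - σ2) (f i)) : ℂ)‖
      ≤ (∑ a ∈ Finset.range k, ∑ c ∈ Finset.range k, ‖(inner ℂ (b a) ((σ1 - σ2) (b c)) : ℂ)‖)
        + 2*δ + δ⁻¹ * (tailTr b σ1 k + tailTr b σ2 k) := by
  set T := σ1 - σ2 with hT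
  have hPQ : ∀ x : H, proj b k x + qproj b k x = x := by
    intro x; rw [qproj_apply]; abel
  have dec : ∀ i : Fin m, (inner ℂ (e i) (T (f i)) : ℂ)
      = inner ℂ (proj b k (e i)) (T (proj b k (f i)))
        + inner ℂ (qproj b k (e i)) (T (proj b k (f i)))
        + inner ℂ (e i) (T (qproj b k (f i))) := by
    intro i
    rw [← inner_add_left, hPQ, ← inner_add_right, ← map_add, hPQ]
  have tri : ∀ i : Fin m, ‖(inner ℂ (e i) (T (f i)) : ℂ)‖
      ≤ ‖(inner ℂ (proj b k (e i)) (T (proj b k (f i))) : ℂ)‖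
        + (‖(inner ℂ (qproj b k (e i)) (σ1 (proj b k (f i))) : ℂ)‖
          + ‖(inner ℂ (qproj b k (e i)) (σ2 (proj b k (f i))) : ℂ)‖)
        + (‖(inner ℂ (e i) (σ1 (qproj b k (f i))) : ℂ)‖
          + ‖(inner ℂ (e i) (σ2 (qproj b k (f i))) : ℂ)‖) := by
    intro i
    rw [dec i]
    refine (norm_add₃_le).trans ?_
    gcongr
    · rw [hT, ContinuousLinearMap.sub_apply, inner_sub_right]
      exact norm_sub_le _ _
    · rw [hT, ContinuousLinearMap.sub_apply, inner_sub_right]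
      exact norm_sub_le _ _
  refine (Finset.sum_le_sum (fun i _ => tri i)).trans ?_
  rw [Finset.sum_add_distrib, Finset.sum_add_distrib, Finset.sum_add_distrib,
    Finset.sum_add_distrib]
  have B0 := block_bound b T k he hf
  have B1 := cross_bound1 b h1 ht1 k he hf hδ
  have B2 := cross_bound1 b h2 ht2 k he hf hδ
  have B3 := cross_bound2 b h1 ht1 k he hf hδ
  have B4 := cross_bound2 b h2 ht2 k he hf hδ
  have hδ' : (0:ℝ) ≤ δ⁻¹ := le_of_lt (inv_pos.2 hδ)
  linarith

/-- On the set of density operators of a separable Hilbert space, weak convergence implies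
trace-norm convergence (Holevo, Lemma 11.1). -/
theorem weak_convergence_implies_traceNorm_convergence (b : HilbertBasis ℕ ℂ H)
    (ρseq : ℕ → H →L[ℂ] H) (ρ : H →L[ℂ] H)
    (hpos : ∀ n, (ρseq n).IsPositive) (hρpos : ρ.IsPositive)
    (htr : ∀ n, opTrace b (ρseq n) = 1) (hρtr : opTrace b ρ = 1)
    (hweak : ∀ ψ φ : H, Filter.Tendsto (fun n => (inner ℂ ψ ((ρseq n) φ) : ℂ))
      Filter.atTop (nhds (inner ℂ ψ (ρ φ)))) :
    Filter.Tendsto (fun n => opTraceNorm (ρseq n - ρ)) Filter.atTop (nhds 0) := by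
  rw [Metric.tendsto_atTop]
  intro ε hε
  set δ : ℝ := ε/8 with hδdef
  have hδ : 0 < δ := by positivity
  -- choose k with small tail for ρ
  obtain ⟨k, hk⟩ : ∃ k : ℕ, tailTr b ρ k ≤ δ^2 := by
    have hsum := (summable_diag b hρpos hρtr).hasSum.tendsto_sum_nat
    have h1 : (1:ℝ) - δ^2 < ∑' j, (inner ℂ (b j) (ρ (b j)) : ℂ).re := by
      rw [← opTrace] at *
      rw [hρtr]; nlinarith
    obtain ⟨k, hk⟩ := (hsum.eventually_const_lt h1).exists
    refine ⟨k, ?_⟩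
    rw [tail_eq b hρpos hρtr k]
    linarith
  -- tail of ρseq n converges to tail of ρ
  have htail : Filter.Tendsto (fun n => tailTr b (ρseq n) k) Filter.atTop
      (nhds (tailTr b ρ k)) := by
    have h1 : ∀ n, tailTr b (ρseq n) k
        = 1 - ∑ j ∈ Finset.range k, (inner ℂ (b j) ((ρseq n) (b j)) : ℂ).re :=
      fun n => tail_eq b (hpos n) (htr n) k
    have h2 : tailTr b ρ k = 1 - ∑ j ∈ Finset.range k, (inner ℂ (b j) (ρ (b j)) : ℂ).re :=
      tail_eq b hρpos hρtr k
    simp_rw [h1, h2]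
    refine Filter.Tendsto.sub tendsto_const_nhds ?_
    refine tendsto_finset_sum _ (fun j _ => ?_)
    exact (Complex.continuous_re.tendsto _).comp (hweak (b j) (b j))
  have htail_ev : ∀ᶠ n in Filter.atTop, tailTr b (ρseq n) k < 2*δ^2 := by
    refine htail.eventually_lt_const ?_
    nlinarith
  -- block converges to 0
  have hM : Filter.Tendsto (fun n => ∑ a ∈ Finset.range k, ∑ c ∈ Finset.range k,
      ‖(inner ℂ (b a) ((ρseq n - ρ) (b c)) : ℂ)‖) Filter.atTop (nhds 0) := by
    have : ∀ a c : ℕ, Filter.Tendsto (fun n => ‖(inner ℂ (b a) ((ρseq n - ρ) (b c)) : ℂ)‖)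
        Filter.atTop (nhds 0) := by
      intro a c
      have h1 : Filter.Tendsto (fun n => (inner ℂ (b a) ((ρseq n - ρ) (b c)) : ℂ))
          Filter.atTop (nhds 0) := by
        have h2 := (hweak (b a) (b c)).sub_const (inner ℂ (b a) (ρ (b c)) : ℂ)
        rw [sub_self] at h2
        refine h2.congr (fun n => ?_)
        rw [ContinuousLinearMap.sub_apply, inner_sub_right]
      simpa using h1.norm
    have := tendsto_finset_sum (Finset.range k) (fun a _ =>
      tendsto_finset_sum (Finset.range k) (fun c _ => this a c))
    simpa using this
  have hM_ev : ∀ᶠ n in Filter.atTop, (∑ a ∈ Finset.range k, ∑ c ∈ Finset.range k,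
      ‖(inner ℂ (b a) ((ρseq n - ρ) (b c)) : ℂ)‖) < δ := hM.eventually_lt_const hδ
  obtain ⟨N, hN⟩ := Filter.eventually_atTop.1 (htail_ev.and hM_ev)
  refine ⟨N, fun n hn => ?_⟩
  obtain ⟨htailn, hMn⟩ := hN n hn
  -- bound every element of the defining set
  have hub : ∀ s ∈ {s : ℝ | ∃ (m : ℕ) (e f : Fin m → H), Orthonormal ℂ e ∧ Orthonormal ℂ f ∧
      s = ∑ i, ‖(inner ℂ (e i) ((ρseq n - ρ) (f i)) : ℂ)‖}, s ≤ 6*δ := by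
    rintro s ⟨m, e, f, he, hf, rfl⟩
    have := master_bound b (hpos n) hρpos (htr n) hρtr k he hf hδ
    have hδinv : δ⁻¹ * (tailTr b (ρseq n) k + tailTr b ρ k) ≤ 3*δ := by
      have h3 : tailTr b (ρseq n) k + tailTr b ρ k ≤ 3*δ^2 := by linarith
      have := mul_le_mul_of_nonneg_left h3 (le_of_lt (inv_pos.2 hδ))
      calc δ⁻¹ * (tailTr b (ρseq n) k + tailTr b ρ k) ≤ δ⁻¹ * (3*δ^2) := this
        _ = 3*δ := by field_simp
    linarith
  have h0mem : (0:ℝ) ∈ {s : ℝ | ∃ (m : ℕ) (e f : Fin m → H), Orthonormal ℂ e ∧ Orthonormal ℂ f ∧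
      s = ∑ i, ‖(inner ℂ (e i) ((ρseq n - ρ) (f i)) : ℂ)‖} := by
    exact ⟨0, ![], ![], ⟨fun i => i.elim0, fun i => i.elim0⟩,
      ⟨fun i => i.elim0, fun i => i.elim0⟩, by simp⟩
  have hnonneg : (0:ℝ) ≤ opTraceNorm (ρseq n - ρ) := by
    unfold opTraceNorm
    refine Real.sSup_nonneg ?_
    rintro x ⟨m, e, f, he, hf, rfl⟩
    exact Finset.sum_nonneg (fun i _ => norm_nonneg _)
  have hle : opTraceNorm (ρseq n - ρ) ≤ 6*δ := by
    unfold opTraceNorm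
    exact Real.sSup_le hub (by linarith)
  rw [Real.dist_eq, sub_zero, abs_of_nonneg hnonneg]
  calc opTraceNorm (ρseq n - ρ) ≤ 6*δ := hle
    _ < ε := by rw [hδdef]; linarith
end
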